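/- Assume ūB(0) > ūA(0) and ūA(1) > ūB(1). (i) If c ∈ (0,1] is such that ūB(y) > ūA(y) for all y ∈ (0, c), then every Carathéodory solution x of the continuous-time imitation population dynamics with x(0) in the interior of 𝒳_s and σ(x(0)) ∈ (0, c) satisfies x(t) → 0 (the zero vector) as t → ∞. (ii) If c ∈ [0,1) is such that ūA(y) > ūB(y) for all y ∈ (c, 1), then every Carathéodory solution x with x(0) in the interior of 𝒳_s and σ(x(0)) ∈ (c, 1) satisfies x(t) → ρ as t → ∞. -/

import Mathlib

open scoped Classical
open MeasureTheory Filter Set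

/-- The state space `ℝ^p`, with the Euclidean norm. -/
abbrev Vec (p : ℕ) := EuclideanSpace ℝ (Fin p)

/-- Maximum of finitely many polynomial utilities at `y`. -/
noncomputable def ubar {p : ℕ} (u : Fin p → Polynomial ℝ) (y : ℝ) : ℝ :=
  ⨆ i, (u i).eval y

/-- The total proportion of `A`-players: `σ(x) = Σ_i x_i`. -/
noncomputable def sigma' {p : ℕ} (x : Vec p) : ℝ := ∑ i, x i

/-- The state space `𝒳_s = ∏_i [0, ρ_i]`. -/
def Xs {p : ℕ} (ρ : Vec p) : Set (Vec p) := {x | ∀ i, x i ∈ Set.Icc 0 (ρ i)}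

/-- The set-valued map of the continuous-time imitation population dynamics. -/
noncomputable def Vmap {p : ℕ} (ρ : Vec p) (uA uB : Fin p → Polynomial ℝ)
    (x : Vec p) : Set (Vec p) :=
  if x ∈ interior (Xs ρ) ∧ ubar uB (sigma' x) < ubar uA (sigma' x) then {ρ - x}
  else if x ∈ interior (Xs ρ) ∧ ubar uA (sigma' x) < ubar uB (sigma' x) then {-x}
  else segment ℝ (ρ - x) (-x)

/-- A Carathéodory solution of the continuous-time imitation population dynamics on `[0,∞)`:
a locally absolutely continuous `𝒳_s`-valued function whose derivative lies in `Vmap`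
almost everywhere, expressed in integral form. -/
def IsPopSol {p : ℕ} (ρ : Vec p) (uA uB : Fin p → Polynomial ℝ) (x : ℝ → Vec p) : Prop :=
  (∀ t, 0 ≤ t → x t ∈ Xs ρ) ∧
  ∃ v : ℝ → Vec p,
    (∀ᵐ t ∂(MeasureTheory.volume.restrict (Set.Ici (0:ℝ))), v t ∈ Vmap ρ uA uB (x t)) ∧
    (∀ t, 0 ≤ t → IntervalIntegrable v MeasureTheory.volume 0 t) ∧
    (∀ t, 0 ≤ t → x t = x 0 + ∫ s in (0:ℝ)..t, v s)

open scoped Topology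

lemma interior_Xs {p : ℕ} (ρ : Vec p) :
    interior (Xs ρ) = {x : Vec p | ∀ i, x i ∈ Set.Ioo 0 (ρ i)} := by
  have h : Xs ρ = PiLp.homeomorph 2 (fun _ : Fin p => ℝ) ⁻¹' Set.pi Set.univ fun i => Set.Icc 0 (ρ i) := by
    ext x; exact ⟨fun hh i _ => hh i, fun hh i => hh i trivial⟩
  rw [h, ← Homeomorph.preimage_interior, interior_pi_set Set.finite_univ]
  ext x
  simp only [Set.mem_preimage, Set.mem_pi, Set.mem_univ, true_implies, interior_Icc]
  exact Iff.rfl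

lemma continuous_sigma' {p : ℕ} : Continuous (sigma' (p := p)) := by
  unfold sigma'
  exact continuous_finset_sum _ fun i _ => (EuclideanSpace.proj i).continuous

lemma sigma'_comb {p : ℕ} (b w : Vec p) (e : ℝ) :
    sigma' (b + e • (w - b)) = sigma' b + e * (sigma' w - sigma' b) := by
  simp only [sigma', PiLp.add_apply, PiLp.smul_apply, PiLp.sub_apply, smul_eq_mul,
    Finset.sum_add_distrib, Finset.mul_sum, mul_sub, Finset.sum_sub_distrib]

lemma pop_core {p : ℕ} (ρ : Vec p) (uA uB : Fin p → Polynomial ℝ)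
    (x v : ℝ → Vec p)
    (hae : ∀ᵐ t ∂(MeasureTheory.volume.restrict (Set.Ici (0:ℝ))), v t ∈ Vmap ρ uA uB (x t))
    (hint : ∀ t, 0 ≤ t → IntervalIntegrable v MeasureTheory.volume 0 t)
    (hx : ∀ t, 0 ≤ t → x t = x 0 + ∫ s in (0:ℝ)..t, v s)
    (b : Vec p) (U : Set (Vec p)) (hU : IsOpen U)
    (hVU : ∀ y ∈ U, Vmap ρ uA uB y = {b - y})
    (hzU : ∀ t : ℝ, 0 ≤ t → b + Real.exp (-t) • (x 0 - b) ∈ U) :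
    ∀ t : ℝ, 0 ≤ t → x t = b + Real.exp (-t) • (x 0 - b) := by
  set z : ℝ → Vec p := fun t => b + Real.exp (-t) • (x 0 - b) with hzdef
  have hzc : Continuous z :=
    continuous_const.add ((Real.continuous_exp.comp continuous_neg).smul continuous_const)
  have hzderiv : ∀ s : ℝ, HasDerivAt z (b - z s) s := by
    intro s
    have h1 : HasDerivAt (fun t : ℝ => Real.exp (-t)) (-Real.exp (-s)) s := by
      simpa using (hasDerivAt_neg s).exp
    have h2 := (h1.smul_const (x 0 - b)).const_add b
    exact h2.congr_deriv (by simp [hzdef, neg_smul])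
  have hxc : ContinuousOn x (Set.Ici 0) := by
    intro t ht
    have hT : (0:ℝ) ≤ t + 1 := by linarith [ht.out]
    have hprim := intervalIntegral.continuousOn_primitive_interval'
      (μ := MeasureTheory.volume) (hint (t+1) hT)
      (by rw [Set.uIcc_of_le hT]; exact Set.left_mem_Icc.2 hT)
    rw [Set.uIcc_of_le hT] at hprim
    have hF : ContinuousOn (fun s => x 0 + ∫ u in (0:ℝ)..s, v u) (Set.Icc 0 (t+1)) :=
      continuousOn_const.add hprim
    have hxeq : Set.EqOn x (fun s => x 0 + ∫ u in (0:ℝ)..s, v u) (Set.Icc 0 (t+1)) :=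
      fun s hs => hx s hs.1
    have hcx : ContinuousWithinAt x (Set.Icc 0 (t+1)) t :=
      (hF.congr hxeq) t ⟨ht, by linarith [ht.out]⟩
    refine hcx.mono_of_mem_nhdsWithin (mem_nhdsWithin.2 ⟨Set.Iio (t+1), isOpen_Iio,
      by simp, fun s hs => ⟨hs.2, hs.1.le⟩⟩)
  intro T hT
  have h0S : (0:ℝ) ∈ {t | x t = z t} := by
    show x 0 = b + Real.exp (-0) • (x 0 - b)
    simp
  have hSc : IsClosed ({t | x t = z t} ∩ Set.Icc 0 T) := by
    have hcont : ContinuousOn (fun t => x t - z t) (Set.Icc 0 T) :=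
      (hxc.mono Set.Icc_subset_Ici_self).sub hzc.continuousOn
    have hcl := hcont.preimage_isClosed_of_isClosed isClosed_Icc
      (isClosed_singleton (x := (0 : Vec p)))
    convert hcl using 1
    ext t
    simp only [Set.mem_inter_iff, Set.mem_setOf_eq, Set.mem_preimage, Set.mem_singleton_iff,
      sub_eq_zero, and_comm]
  have hstep : ∀ t0 ∈ {t | x t = z t} ∩ Set.Ico 0 T, ∀ y ∈ Set.Ioi t0,
      ({t | x t = z t} ∩ Set.Ioc t0 y).Nonempty := by
    rintro t0 ⟨hxz0, ht0, _⟩ y hy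
    have hxU : x t0 ∈ U := by rw [hxz0]; exact hzU t0 ht0
    have hmem : x ⁻¹' U ∈ 𝓝[Set.Ici t0] t0 :=
      nhdsWithin_mono t0 (Set.Ici_subset_Ici.2 ht0) ((hxc t0 ht0) (hU.mem_nhds hxU))
    obtain ⟨u, hu, hsub⟩ := mem_nhdsGE_iff_exists_Icc_subset.1 hmem
    set t1 := min u y with ht1def
    have ht01 : t0 < t1 := lt_min hu hy
    have hIU : ∀ s ∈ Set.Icc t0 t1, x s ∈ U :=
      fun s hs => hsub ⟨hs.1, hs.2.trans (min_le_left _ _)⟩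
    have hxcI : ContinuousOn x (Set.Icc t0 t1) :=
      hxc.mono (fun s hs => ht0.trans hs.1)
    have hg : ContinuousOn (fun s => b - x s) (Set.Icc t0 t1) :=
      continuousOn_const.sub hxcI
    have key : ∀ s ∈ Set.Icc t0 t1, x s = x t0 + ∫ u in t0..s, (b - x u) := by
      intro s hs
      have hs0 : (0:ℝ) ≤ s := ht0.trans hs.1
      have hvts : IntervalIntegrable v MeasureTheory.volume t0 s := by
        refine (hint s hs0).mono_set ?_
        rw [Set.uIcc_of_le hs.1, Set.uIcc_of_le hs0]
        exact Set.Icc_subset_Icc ht0 le_rfl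
      have hsplit : x s = x t0 + ∫ u in t0..s, v u := by
        rw [hx s hs0, hx t0 ht0, add_assoc,
          intervalIntegral.integral_add_adjacent_intervals (hint t0 ht0) hvts]
      rw [hsplit]
      congr 1
      apply intervalIntegral.integral_congr_ae
      have haeI : ∀ᵐ u ∂(MeasureTheory.volume), u ∈ Set.Ici (0:ℝ) → v u ∈ Vmap ρ uA uB (x u) :=
        (MeasureTheory.ae_restrict_iff' measurableSet_Ici).1 hae
      filter_upwards [haeI] with u hu1 hu2
      rw [Set.uIoc_of_le hs.1] at hu2
      have hxuU : x u ∈ U := hIU u ⟨hu2.1.le, hu2.2.trans hs.2⟩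
      have hmemv := hu1 (ht0.trans hu2.1.le)
      rw [hVU _ hxuU] at hmemv
      exact hmemv
    have hxderiv : ∀ s ∈ Set.Ico t0 t1,
        HasDerivWithinAt x ((fun (_ : ℝ) (y : Vec p) => b - y) s (x s)) (Set.Ici s) s := by
      intro s hs
      have hIccmem : Set.Icc s t1 ∈ 𝓝[Set.Ici s] s := Icc_mem_nhdsGE_of_mem ⟨le_rfl, hs.2⟩
      have hIoimem : Set.Icc s t1 ∈ 𝓝[Set.Ioi s] s :=
        nhdsWithin_mono s Set.Ioi_subset_Ici_self hIccmem
      have hgint : IntervalIntegrable (fun u => b - x u) MeasureTheory.volume t0 s :=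
        (hg.mono (Set.Icc_subset_Icc le_rfl hs.2.le)).intervalIntegrable_of_Icc hs.1
      have hmeas : StronglyMeasurableAtFilter (fun u => b - x u) (𝓝[Set.Ioi s] s)
          MeasureTheory.volume :=
        ⟨Set.Icc s t1, hIoimem,
          ((hg.mono (Set.Icc_subset_Icc hs.1 le_rfl)).aestronglyMeasurable measurableSet_Icc)⟩
      have hcontw : ContinuousWithinAt (fun u => b - x u) (Set.Ioi s) s :=
        (hg s ⟨hs.1, hs.2.le⟩).mono_of_mem_nhdsWithin
          (Filter.mem_of_superset hIoimem (Set.Icc_subset_Icc hs.1 le_rfl))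
      have hF : HasDerivWithinAt (fun r => x t0 + ∫ u in t0..r, (b - x u))
          (b - x s) (Set.Ici s) s :=
        (intervalIntegral.integral_hasDerivWithinAt_right hgint hmeas hcontw).const_add (x t0)
      exact hF.congr_of_eventuallyEq
        (Filter.eventuallyEq_of_mem hIccmem fun r hr => key r ⟨hs.1.trans hr.1, hr.2⟩)
        (key s ⟨hs.1, hs.2.le⟩)
    have hlip : ∀ t, LipschitzOnWith 1 ((fun (_ : ℝ) (y : Vec p) => b - y) t)
        ((fun (_ : ℝ) => (Set.univ : Set (Vec p))) t) := by
      intro t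
      apply LipschitzWith.lipschitzOnWith
      apply LipschitzWith.of_dist_le_mul
      intro y w
      rw [NNReal.coe_one, one_mul, dist_eq_norm, sub_sub_sub_cancel_left, ← dist_eq_norm,
        dist_comm]
    have heq : Set.EqOn x z (Set.Icc t0 t1) :=
      ODE_solution_unique_of_mem_Icc_right (fun t _ => hlip t)
        hxcI hxderiv (fun t _ => Set.mem_univ _)
        (hzc.continuousOn) (fun s _ => (hzderiv s).hasDerivWithinAt)
        (fun t _ => Set.mem_univ _) hxz0
    exact ⟨t1, heq ⟨ht01.le, le_rfl⟩, ht01, min_le_right u y⟩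
  exact IsClosed.Icc_subset_of_forall_exists_gt hSc h0S hstep (Set.right_mem_Icc.2 hT)

theorem population_convergence_to_extremes
    {p : ℕ} (hp : 0 < p) (ρ : Vec p) (hρ : ∀ i, 0 < ρ i) (hsum : ∑ i, ρ i = 1)
    (uA uB : Fin p → Polynomial ℝ)
    (h0 : ubar uA 0 < ubar uB 0) (h1 : ubar uB 1 < ubar uA 1) :
    (∀ c : ℝ, c ∈ Set.Ioc (0:ℝ) 1 →
      (∀ y ∈ Set.Ioo (0:ℝ) c, ubar uA y < ubar uB y) →
      ∀ x : ℝ → Vec p, IsPopSol ρ uA uB x → x 0 ∈ interior (Xs ρ) →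
        sigma' (x 0) ∈ Set.Ioo (0:ℝ) c →
        Filter.Tendsto x Filter.atTop (nhds (0 : Vec p))) ∧
    (∀ c : ℝ, c ∈ Set.Ico (0:ℝ) 1 →
      (∀ y ∈ Set.Ioo c 1, ubar uB y < ubar uA y) →
      ∀ x : ℝ → Vec p, IsPopSol ρ uA uB x → x 0 ∈ interior (Xs ρ) →
        sigma' (x 0) ∈ Set.Ioo c 1 →
        Filter.Tendsto x Filter.atTop (nhds ρ)) := by
  constructor
  · -- part (i): convergence to 0
    intro c hc hAB x hsol hx0int hσ0
    obtain ⟨hXmem, v, hae, hint, hx⟩ := hsol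
    set U : Set (Vec p) := interior (Xs ρ) ∩ sigma' ⁻¹' (Set.Ioo 0 c) with hUdef
    have hUopen : IsOpen U := isOpen_interior.inter (isOpen_Ioo.preimage continuous_sigma')
    have hVU : ∀ y ∈ U, Vmap ρ uA uB y = {(0:Vec p) - y} := by
      intro y hy
      have hlt : ubar uA (sigma' y) < ubar uB (sigma' y) := hAB _ hy.2
      rw [Vmap, if_neg (fun h => absurd h.2 (lt_asymm hlt)), if_pos ⟨hy.1, hlt⟩]
      rw [zero_sub]
    have hx0i : ∀ i, x 0 i ∈ Set.Ioo 0 (ρ i) := by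
      rw [interior_Xs] at hx0int; exact hx0int
    have hzU : ∀ t : ℝ, 0 ≤ t → (0:Vec p) + Real.exp (-t) • (x 0 - 0) ∈ U := by
      intro t ht
      have he1 : Real.exp (-t) ≤ 1 := Real.exp_le_one_iff.2 (by linarith)
      have he0 : 0 < Real.exp (-t) := Real.exp_pos _
      constructor
      · rw [interior_Xs]
        intro i
        have hi := hx0i i
        have hcoord : ((0:Vec p) + Real.exp (-t) • (x 0 - 0)) i = Real.exp (-t) * (x 0 i) := by
          simp [PiLp.add_apply, PiLp.smul_apply, PiLp.sub_apply]
        rw [hcoord]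
        constructor
        · exact mul_pos he0 hi.1
        · calc Real.exp (-t) * x 0 i ≤ x 0 i := mul_le_of_le_one_left hi.1.le he1
            _ < ρ i := hi.2
      · have hs : sigma' ((0:Vec p) + Real.exp (-t) • (x 0 - 0))
            = Real.exp (-t) * sigma' (x 0) := by
          rw [sigma'_comb]
          simp [sigma']
        rw [Set.mem_preimage, hs]
        constructor
        · exact mul_pos he0 hσ0.1
        · calc Real.exp (-t) * sigma' (x 0) ≤ sigma' (x 0) :=
              mul_le_of_le_one_left hσ0.1.le he1
            _ < c := hσ0.2
    have hmain := pop_core ρ uA uB x v hae hint hx 0 U hUopen hVU hzU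
    have hlim : Tendsto (fun t : ℝ => (0:Vec p) + Real.exp (-t) • (x 0 - 0)) atTop
        (𝓝 (0 : Vec p)) := by
      have h1' : Tendsto (fun t : ℝ => Real.exp (-t)) atTop (𝓝 0) :=
        Real.tendsto_exp_neg_atTop_nhds_zero
      simpa using (h1'.smul_const (x 0 - 0)).const_add (0 : Vec p)
    refine Filter.Tendsto.congr' ?_ hlim
    filter_upwards [eventually_ge_atTop (0:ℝ)] with t ht
    exact (hmain t ht).symm
  · -- part (ii): convergence to ρ
    intro c hc hAB x hsol hx0int hσ0
    obtain ⟨hXmem, v, hae, hint, hx⟩ := hsol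
    set U : Set (Vec p) := interior (Xs ρ) ∩ sigma' ⁻¹' (Set.Ioo c 1) with hUdef
    have hUopen : IsOpen U := isOpen_interior.inter (isOpen_Ioo.preimage continuous_sigma')
    have hVU : ∀ y ∈ U, Vmap ρ uA uB y = {ρ - y} := by
      intro y hy
      rw [Vmap, if_pos ⟨hy.1, hAB _ hy.2⟩]
    have hx0i : ∀ i, x 0 i ∈ Set.Ioo 0 (ρ i) := by
      rw [interior_Xs] at hx0int; exact hx0int
    have hσρ : sigma' ρ = 1 := hsum
    have hzU : ∀ t : ℝ, 0 ≤ t → ρ + Real.exp (-t) • (x 0 - ρ) ∈ U := by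
      intro t ht
      have he1 : Real.exp (-t) ≤ 1 := Real.exp_le_one_iff.2 (by linarith)
      have he0 : 0 < Real.exp (-t) := Real.exp_pos _
      constructor
      · rw [interior_Xs]
        intro i
        have hi := hx0i i
        have hcoord : (ρ + Real.exp (-t) • (x 0 - ρ)) i = ρ i + Real.exp (-t) * (x 0 i - ρ i) := by
          simp [PiLp.add_apply, PiLp.smul_apply, PiLp.sub_apply]
        rw [hcoord]
        constructor
        · nlinarith [hi.1, hi.2, hρ i]
        · nlinarith [hi.1, hi.2]
      · have hs : sigma' (ρ + Real.exp (-t) • (x 0 - ρ))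
            = 1 + Real.exp (-t) * (sigma' (x 0) - 1) := by
          rw [sigma'_comb, hσρ]
        rw [Set.mem_preimage, hs]
        constructor
        · nlinarith [hσ0.1, hσ0.2]
        · nlinarith [hσ0.2]
    have hmain := pop_core ρ uA uB x v hae hint hx ρ U hUopen hVU hzU
    have hlim : Tendsto (fun t : ℝ => ρ + Real.exp (-t) • (x 0 - ρ)) atTop (𝓝 ρ) := by
      have h1' : Tendsto (fun t : ℝ => Real.exp (-t)) atTop (𝓝 0) :=
        Real.tendsto_exp_neg_atTop_nhds_zero
      simpa using (h1'.smul_const (x 0 - ρ)).const_add ρ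
    refine Filter.Tendsto.congr' ?_ hlim
    filter_upwards [eventually_ge_atTop (0:ℝ)] with t ht
    exact (hmain t ht).symm
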